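/- Let n ≥ 1 be an integer and let a, ρ be smooth real-valued functions on a neighborhood of 0 in ℝ. Then there exist unique real numbers u₂, …, u_{n+1}, ℓ such that the function u(r) := r + u₂r² + ⋯ + u_{n+1}r^{n+1} + ℓ·r^{n+2}·log r satisfies n(n+1)·u'(r)² − 2n·u(r)·(u''(r) + a(r)·u'(r)) − u(r)²·ρ(r) − n(n+1) = O(r^{n+2}·log r) as r → 0⁺. -/

import Mathlib

open Topology Filter Asymptotics

/-- The candidate approximate singular Yamabe defining function
`u(r) = r + u₂r² + ⋯ + u_{n+1}r^{n+1} + ℓ r^{n+2} log r`, with `v k = u_{k+2}`. -/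
noncomputable def syDefiningFn (n : ℕ) (v : Fin n → ℝ) (ℓ : ℝ) : ℝ → ℝ :=
  fun r => r + ∑ k : Fin n, v k * r ^ ((k : ℕ) + 2) + ℓ * r ^ (n + 2) * Real.log r

namespace SY
open Real Finset

lemma tendsto_pow_mul_log {j : ℕ} (hj : 1 ≤ j) :
    Tendsto (fun r : ℝ => r ^ j * Real.log r) (𝓝[>] (0:ℝ)) (𝓝 0) := by
  obtain ⟨i, rfl⟩ : ∃ i, j = i + 1 := ⟨j - 1, (Nat.succ_pred_eq_of_pos hj).symm⟩
  have h1 : Tendsto (fun r : ℝ => Real.log r * r) (𝓝[>] (0:ℝ)) (𝓝 0) := by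
    simpa using tendsto_log_mul_rpow_nhdsGT_zero (r := 1) one_pos
  have h2 : Tendsto (fun r : ℝ => r ^ i) (𝓝[>] (0:ℝ)) (𝓝 ((0:ℝ) ^ i)) :=
    (continuous_pow i).continuousAt.tendsto.mono_left nhdsWithin_le_nhds
  have := h2.mul h1
  simp only [mul_zero] at this
  refine this.congr (fun r => by ring)

lemma ev_pos : ∀ᶠ r in (𝓝[>] (0:ℝ)), 0 < r := self_mem_nhdsWithin

lemma ev_le_one : ∀ᶠ r in (𝓝[>] (0:ℝ)), r ≤ 1 := by
  filter_upwards [eventually_nhdsWithin_of_eventually_nhds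
    (eventually_abs_sub_lt (0:ℝ) one_pos)] with r hr
  rw [sub_zero] at hr
  exact (le_abs_self r).trans hr.le

lemma ev_log : ∀ᶠ r in (𝓝[>] (0:ℝ)), 1 ≤ |Real.log r| := by
  have := Real.tendsto_log_nhdsGT_zero
  filter_upwards [this.eventually (eventually_le_atBot (-1))] with r hr
  rw [abs_of_nonpos (by linarith)]; linarith

/-- The auxiliary comparison scale `r^(m+2) (1+|log r|)`. -/
noncomputable def g (m : ℕ) : ℝ → ℝ := fun r => r ^ (m+2) * (1 + |Real.log r|)

lemma pow_O {i j : ℕ} (h : j ≤ i) :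
    (fun r : ℝ => r ^ i) =O[𝓝[>] (0:ℝ)] fun r => r ^ j := by
  refine IsBigO.of_bound 1 ?_
  filter_upwards [ev_pos, ev_le_one] with r hr h1
  simp only [Real.norm_eq_abs]
  rw [one_mul, abs_of_pos (pow_pos hr i), abs_of_pos (pow_pos hr j)]
  exact pow_le_pow_of_le_one hr.le h1 h

lemma powLog_O_pow {i j : ℕ} (h : j < i) :
    (fun r : ℝ => r ^ i * Real.log r) =O[𝓝[>] (0:ℝ)] fun r => r ^ j := by
  have hev := (tendsto_pow_mul_log (j := i - j) (by omega)).eventually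
    (eventually_abs_sub_lt (0:ℝ) one_pos)
  refine IsBigO.of_bound 1 ?_
  filter_upwards [ev_pos, hev] with r hr hb
  simp only [Real.norm_eq_abs]
  rw [sub_zero] at hb
  have : |r ^ i * Real.log r| = |r ^ j| * |r ^ (i-j) * Real.log r| := by
    rw [← abs_mul]; congr 1; rw [← mul_assoc, ← pow_add]; congr 2; omega
  rw [this, one_mul]
  nlinarith [abs_nonneg (r ^ j), abs_nonneg (r ^ (i-j) * Real.log r)]

lemma powLog_O_powLog {i j : ℕ} (h : j ≤ i) :
    (fun r : ℝ => r ^ i * Real.log r) =O[𝓝[>] (0:ℝ)] fun r => r ^ j * Real.log r := by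
  refine IsBigO.of_bound 1 ?_
  filter_upwards [ev_pos, ev_le_one] with r hr h1
  simp only [Real.norm_eq_abs]
  rw [one_mul, abs_mul, abs_mul]
  have := pow_le_pow_of_le_one hr.le h1 h
  have h2 : |r ^ i| ≤ |r ^ j| := by
    rw [abs_of_pos (pow_pos hr i), abs_of_pos (pow_pos hr j)]; exact this
  exact mul_le_mul_of_nonneg_right h2 (abs_nonneg _)

lemma pow_O_G {i j : ℕ} (h : j ≤ i) :
    (fun r : ℝ => r ^ i) =O[𝓝[>] (0:ℝ)] fun r => r ^ j * (1 + |Real.log r|) := by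
  refine IsBigO.of_bound 1 ?_
  filter_upwards [ev_pos, ev_le_one] with r hr h1
  simp only [Real.norm_eq_abs]
  have h2 : |r ^ i| ≤ r ^ j := by
    rw [abs_of_pos (pow_pos hr i)]; exact pow_le_pow_of_le_one hr.le h1 h
  have h3 : r ^ j ≤ r ^ j * (1 + |Real.log r|) := by
    nlinarith [pow_pos hr j, abs_nonneg (Real.log r)]
  rw [one_mul]
  calc |r ^ i| ≤ r ^ j * (1 + |Real.log r|) := h2.trans h3
    _ ≤ |r ^ j * (1 + |Real.log r|)| := le_abs_self _

lemma powLog_O_G {i j : ℕ} (h : j ≤ i) :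
    (fun r : ℝ => r ^ i * Real.log r) =O[𝓝[>] (0:ℝ)]
      fun r => r ^ j * (1 + |Real.log r|) := by
  refine IsBigO.of_bound 1 ?_
  filter_upwards [ev_pos, ev_le_one] with r hr h1
  simp only [Real.norm_eq_abs]
  have h2 : |r ^ i| ≤ r ^ j := by
    rw [abs_of_pos (pow_pos hr i)]; exact pow_le_pow_of_le_one hr.le h1 h
  rw [one_mul, abs_mul]
  have h4 : 0 ≤ 1 + |Real.log r| := by positivity
  rw [abs_mul (r ^ j), abs_of_pos (pow_pos hr j), abs_of_nonneg h4]
  nlinarith [abs_nonneg (Real.log r), pow_pos hr j, abs_nonneg (r ^ i)]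

lemma pow_O_g {i m : ℕ} (h : m + 2 ≤ i) :
    (fun r : ℝ => r ^ i) =O[𝓝[>] (0:ℝ)] g m := pow_O_G h

lemma powLog_O_g {i m : ℕ} (h : m + 2 ≤ i) :
    (fun r : ℝ => r ^ i * Real.log r) =O[𝓝[>] (0:ℝ)] g m := powLog_O_G h

lemma g_littleO (m : ℕ) : (g m) =o[𝓝[>] (0:ℝ)] fun r : ℝ => r ^ (m+1) := by
  have h1 : (fun r : ℝ => r * (1 + |Real.log r|)) =o[𝓝[>] (0:ℝ)] (fun _ => (1:ℝ)) := by
    rw [isLittleO_one_iff]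
    have ha : Tendsto (fun r : ℝ => r) (𝓝[>] (0:ℝ)) (𝓝 0) :=
      tendsto_id.mono_left nhdsWithin_le_nhds
    have hb : Tendsto (fun r : ℝ => |r ^ 1 * Real.log r|) (𝓝[>] (0:ℝ)) (𝓝 0) := by
      simpa using (tendsto_pow_mul_log le_rfl).abs
    have := ha.add hb
    rw [add_zero] at this
    refine this.congr' ?_
    filter_upwards [ev_pos] with r hr
    rw [pow_one, abs_mul, abs_of_pos hr]; ring
  have h2 := h1.mul_isBigO (isBigO_refl (fun r : ℝ => r ^ (m+1)) _)
  refine ((h2.congr' ?_ ?_) : _)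
  · filter_upwards with r; simp [g]; ring
  · filter_upwards with r; simp

lemma gn_O_target (n : ℕ) :
    (g n) =O[𝓝[>] (0:ℝ)] fun r : ℝ => r ^ (n+2) * Real.log r := by
  refine IsBigO.of_bound 2 ?_
  filter_upwards [ev_pos, ev_log] with r hr hl
  simp only [Real.norm_eq_abs]
  rw [g, abs_mul, abs_mul, abs_of_pos (pow_pos hr (n+2)),
    abs_of_nonneg (by positivity : (0:ℝ) ≤ 1 + |Real.log r|)]
  nlinarith [pow_pos hr (n+2)]

lemma id_O_one : (fun r : ℝ => r) =O[𝓝[>] (0:ℝ)] (fun _ => (1:ℝ)) :=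
  (tendsto_id.mono_left nhdsWithin_le_nhds).isBigO_one ℝ

/-- kill a coefficient: if `c r^j = O(ψ)` and `ψ = o(r^j)` then `c = 0`. -/
lemma coeff_eq_zero {c : ℝ} {j : ℕ} {ψ : ℝ → ℝ}
    (h1 : (fun r : ℝ => c * r ^ j) =O[𝓝[>] (0:ℝ)] ψ)
    (h2 : ψ =o[𝓝[>] (0:ℝ)] fun r : ℝ => r ^ j) : c = 0 := by
  have h3 := (h1.trans_isLittleO h2).tendsto_div_nhds_zero
  have h4 : Tendsto (fun _ : ℝ => c) (𝓝[>] (0:ℝ)) (𝓝 0) := by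
    refine h3.congr' ?_
    filter_upwards [ev_pos] with r hr
    field_simp
  exact tendsto_nhds_unique tendsto_const_nhds h4

/-- summation bound: `∑ c_k r^(k+e) = O(r^e)`. -/
lemma sum_O {n : ℕ} (c : Fin n → ℝ) (e : ℕ) :
    (fun r : ℝ => ∑ k : Fin n, c k * r ^ ((k:ℕ) + e)) =O[𝓝[>] (0:ℝ)] fun r => r ^ e := by
  refine IsBigO.fun_sum fun k _ => ?_
  exact ((pow_O (Nat.le_add_left e k)).const_mul_left (c k))

/-- summation tail bound: if the coefficients below `m` vanish, then removing the `m`-th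
term leaves `O(r^(m+e+1))`. -/
lemma sum_tail {n : ℕ} (c : Fin n → ℝ) (m : ℕ) (hm : m < n)
    (hc : ∀ k : Fin n, (k:ℕ) < m → c k = 0) (e : ℕ) :
    (fun r : ℝ => (∑ k : Fin n, c k * r ^ ((k:ℕ) + e)) - c ⟨m, hm⟩ * r ^ (m + e))
      =O[𝓝[>] (0:ℝ)] fun r => r ^ (m + e + 1) := by
  have hsplit : ∀ r : ℝ, (∑ k : Fin n, c k * r ^ ((k:ℕ) + e)) - c ⟨m, hm⟩ * r ^ (m + e)
      = ∑ k ∈ Finset.univ.erase ⟨m, hm⟩, c k * r ^ ((k:ℕ) + e) := by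
    intro r
    rw [← Finset.sum_erase_add Finset.univ _ (Finset.mem_univ ⟨m, hm⟩)]
    simp
  refine (IsBigO.fun_sum fun k hk => ?_).congr (fun r => (hsplit r).symm) (fun r => rfl)
  rcases lt_or_ge (k : ℕ) m with h | h
  · have hz : (fun r : ℝ => c k * r ^ ((k:ℕ) + e)) = fun _ => 0 := by
      funext r; simp [hc k h]
    rw [hz]
    exact isBigO_zero _ _
  · have hne : (k:ℕ) ≠ m := fun he => (Finset.mem_erase.1 hk).1 (Fin.ext he)
    have : m + e + 1 ≤ (k:ℕ) + e := by omega
    exact (pow_O this).const_mul_left (c k)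

/-- summation low bound: if the coefficients below `m` vanish then the sum is `O(r^(m+e))`. -/
lemma sum_low {n : ℕ} (c : Fin n → ℝ) (m : ℕ) (hm : m < n)
    (hc : ∀ k : Fin n, (k:ℕ) < m → c k = 0) (e : ℕ) :
    (fun r : ℝ => ∑ k : Fin n, c k * r ^ ((k:ℕ) + e)) =O[𝓝[>] (0:ℝ)] fun r => r ^ (m + e) := by
  have h1 := (sum_tail c m hm hc e).trans (pow_O (Nat.le_succ _))
  have h2 : (fun r : ℝ => c ⟨m, hm⟩ * r ^ (m + e)) =O[𝓝[>] (0:ℝ)] fun r => r ^ (m + e) :=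
    (isBigO_refl _ _).const_mul_left _
  simpa using h1.add h2

/-- divide a big-O by `r`. -/
lemma isBigO_div_r {f : ℝ → ℝ} {s : ℕ}
    (h : (fun r : ℝ => r * f r) =O[𝓝[>] (0:ℝ)] fun r => r ^ (s+1)) :
    f =O[𝓝[>] (0:ℝ)] fun r => r ^ s := by
  obtain ⟨C, hC⟩ := h.bound
  refine IsBigO.of_bound C ?_
  filter_upwards [ev_pos, hC] with r hr h1
  simp only [Real.norm_eq_abs] at *
  rw [abs_mul, abs_of_pos hr] at h1
  rw [pow_succ, abs_mul, abs_of_pos hr, ← mul_assoc] at h1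
  have h2 : r * |f r| ≤ r * (C * |r ^ s|) := by linarith
  exact (mul_le_mul_iff_right₀ hr).1 h2

/-- vanishing of polynomial coefficients from one-sided big-O. -/
lemma polyO : ∀ (N : ℕ) (c : ℕ → ℝ) (s : ℕ),
    ((fun r : ℝ => ∑ k ∈ Finset.range N, c k * r ^ k) =O[𝓝[>] (0:ℝ)] fun r => r ^ s) →
    ∀ k, k < N → k < s → c k = 0 := by
  intro N
  induction N with
  | zero => intro c s h k hk; omega
  | succ N ih =>
    intro c s h k hkN hks
    rcases Nat.eq_zero_or_pos s with rfl | hs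
    · omega
    obtain ⟨s', rfl⟩ : ∃ s', s = s' + 1 := ⟨s - 1, by omega⟩
    -- first: c 0 = 0
    have hcont : Tendsto (fun r : ℝ => ∑ k ∈ Finset.range (N+1), c k * r ^ k)
        (𝓝[>] (0:ℝ)) (𝓝 (∑ k ∈ Finset.range (N+1), c k * (0:ℝ) ^ k)) := by
      refine (Continuous.tendsto ?_ 0).mono_left nhdsWithin_le_nhds
      exact continuous_finset_sum _ fun k _ => continuous_const.mul (continuous_pow k)
    have hval : (∑ k ∈ Finset.range (N+1), c k * (0:ℝ) ^ k) = c 0 := by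
      rw [Finset.sum_range_succ']
      simp
    have hzero : Tendsto (fun r : ℝ => ∑ k ∈ Finset.range (N+1), c k * r ^ k)
        (𝓝[>] (0:ℝ)) (𝓝 0) := by
      have hlo : (fun r : ℝ => ∑ k ∈ Finset.range (N+1), c k * r ^ k)
          =o[𝓝[>] (0:ℝ)] (fun _ => (1:ℝ)) := by
        refine h.trans_isLittleO ?_
        rw [isLittleO_one_iff]
        have : Tendsto (fun r : ℝ => r ^ (s'+1)) (𝓝[>] (0:ℝ)) (𝓝 ((0:ℝ) ^ (s'+1))) :=
          (continuous_pow _).continuousAt.tendsto.mono_left nhdsWithin_le_nhds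
        simpa using this
      rwa [isLittleO_one_iff] at hlo
    have hc0 : c 0 = 0 := by
      rw [hval] at hcont
      exact (tendsto_nhds_unique hcont hzero)
    rcases Nat.eq_zero_or_pos k with rfl | hk
    · exact hc0
    -- now factor out r
    have hfac : ∀ r : ℝ, (∑ k ∈ Finset.range (N+1), c k * r ^ k)
        = r * ∑ k ∈ Finset.range N, c (k+1) * r ^ k := by
      intro r
      rw [Finset.sum_range_succ', hc0, Finset.mul_sum]
      simp only [zero_mul, pow_zero, mul_one, add_zero]
      refine Finset.sum_congr rfl fun i _ => by ring
    have h2 : (fun r : ℝ => r * ∑ k ∈ Finset.range N, c (k+1) * r ^ k)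
        =O[𝓝[>] (0:ℝ)] fun r => r ^ (s'+1) := by
      exact h.congr hfac (fun _ => rfl)
    have h3 := isBigO_div_r h2
    have := ih (fun k => c (k+1)) s' h3 (k - 1) (by omega) (by omega)
    have hk1 : k - 1 + 1 = k := by omega
    have this2 : c (k - 1 + 1) = 0 := this
    rwa [hk1] at this2

/-- Taylor extraction: a smooth function which is `O(r^(m+1))` as `r → 0⁺` admits a
coefficient `c` with `φ - c r^(m+1) = O(r^(m+2))`. -/
lemma smooth_extract {U : Set ℝ} (hUo : IsOpen U) (hU0 : (0:ℝ) ∈ U) {φ : ℝ → ℝ}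
    (hφ : ContDiffOn ℝ (⊤:ℕ∞) φ U) (m : ℕ)
    (h : φ =O[𝓝[>] (0:ℝ)] fun r => r ^ (m+1)) :
    ∃ c : ℝ, (fun r => φ r - c * r ^ (m+1)) =O[𝓝[>] (0:ℝ)] fun r => r ^ (m+2) := by
  obtain ⟨ε, hε, hball⟩ := Metric.isOpen_iff.1 hUo 0 hU0
  set b : ℝ := ε / 2 with hbdef
  have hb : 0 < b := by positivity
  have hsub : Set.Icc (0:ℝ) b ⊆ U := by
    intro x hx
    apply hball
    rw [Metric.mem_ball, Real.dist_eq, sub_zero, abs_of_nonneg hx.1]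
    calc x ≤ b := hx.2
      _ < ε := by rw [hbdef]; linarith
  have hφ' : ContDiffOn ℝ ((m+2 : ℕ) + 1) φ (Set.Icc 0 b) := by
    exact (hφ.mono hsub).of_le (WithTop.coe_le_coe.mpr le_top)
  obtain ⟨C, hC⟩ := exists_taylor_mean_remainder_bound hb.le hφ'
  set c : ℕ → ℝ := fun k => (Nat.factorial k : ℝ)⁻¹ * iteratedDerivWithin k φ (Set.Icc 0 b) 0 with hcdef
  have hT : ∀ x : ℝ, taylorWithinEval φ (m+2) (Set.Icc 0 b) 0 x
      = ∑ k ∈ Finset.range (m+3), c k * x ^ k := by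
    intro x
    rw [taylor_within_apply]
    refine Finset.sum_congr rfl fun k _ => ?_
    rw [smul_eq_mul, hcdef, sub_zero]
    ring
  have hIoo : Set.Ioo (0:ℝ) b ∈ 𝓝[>] (0:ℝ) := Ioo_mem_nhdsGT_of_mem ⟨le_refl _, hb⟩
  have hrem : (fun r : ℝ => φ r - ∑ k ∈ Finset.range (m+3), c k * r ^ k)
      =O[𝓝[>] (0:ℝ)] fun r => r ^ (m+3) := by
    refine IsBigO.of_bound C ?_
    filter_upwards [hIoo, ev_pos] with r hrIoo hr
    have := hC r (Set.mem_Icc.2 ⟨hrIoo.1.le, hrIoo.2.le⟩)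
    rw [hT r] at this
    simp only [Real.norm_eq_abs, sub_zero] at this ⊢
    calc |φ r - ∑ k ∈ Finset.range (m+3), c k * r ^ k| ≤ C * r ^ (m+3) := this
      _ ≤ C * |r ^ (m+3)| := by rw [abs_of_pos (pow_pos hr _)]
  have hpoly : (fun r : ℝ => ∑ k ∈ Finset.range (m+3), c k * r ^ k)
      =O[𝓝[>] (0:ℝ)] fun r => r ^ (m+1) := by
    have := h.sub (hrem.trans (pow_O (by omega)))
    exact this.congr (fun r => by ring) (fun r => rfl)
  have hzero : ∀ k, k < m + 1 → c k = 0 := fun k hk =>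
    polyO (m+3) c (m+1) hpoly k (by omega) hk
  have hsum : ∀ r : ℝ, (∑ k ∈ Finset.range (m+3), c k * r ^ k)
      = c (m+1) * r ^ (m+1) + c (m+2) * r ^ (m+2) := by
    intro r
    rw [show m + 3 = (m+2)+1 from rfl, Finset.sum_range_succ,
      show m + 2 = (m+1)+1 from rfl, Finset.sum_range_succ]
    rw [Finset.sum_eq_zero fun k hk => by
      rw [hzero k (Finset.mem_range.1 hk)]; ring]
    ring
  refine ⟨c (m+1), ?_⟩
  have hfin := hrem.trans (pow_O (by omega : m + 2 ≤ m + 3))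
  have h2 : (fun r : ℝ => c (m+2) * r ^ (m+2)) =O[𝓝[>] (0:ℝ)] fun r => r ^ (m+2) :=
    (isBigO_refl _ _).const_mul_left _
  have := hfin.add h2
  refine this.congr (fun r => ?_) (fun r => rfl)
  rw [hsum r]
  ring

/-! ### The explicit error function and its ingredients -/

noncomputable def L0 (n : ℕ) : ℝ → ℝ := fun r => r ^ (n+2) * Real.log r
noncomputable def L1 (n : ℕ) : ℝ → ℝ :=
  fun r => ((n:ℝ)+2) * r ^ (n+1) * Real.log r + r ^ (n+1)
noncomputable def L2 (n : ℕ) : ℝ → ℝ :=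
  fun r => ((n:ℝ)+2) * ((n:ℝ)+1) * r ^ n * Real.log r + (2*(n:ℝ)+3) * r ^ n

def S0 (n : ℕ) (v : Fin n → ℝ) : ℝ → ℝ := fun r => ∑ k : Fin n, v k * r ^ ((k:ℕ)+2)
def S1 (n : ℕ) (v : Fin n → ℝ) : ℝ → ℝ :=
  fun r => ∑ k : Fin n, (((k:ℕ):ℝ)+2) * v k * r ^ ((k:ℕ)+1)
def S2 (n : ℕ) (v : Fin n → ℝ) : ℝ → ℝ :=
  fun r => ∑ k : Fin n, (((k:ℕ):ℝ)+2) * (((k:ℕ):ℝ)+1) * v k * r ^ (k:ℕ)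

noncomputable def F0 (n : ℕ) (v : Fin n → ℝ) (ℓ : ℝ) : ℝ → ℝ :=
  fun r => r + S0 n v r + ℓ * L0 n r
noncomputable def F1 (n : ℕ) (v : Fin n → ℝ) (ℓ : ℝ) : ℝ → ℝ :=
  fun r => 1 + S1 n v r + ℓ * L1 n r
noncomputable def F2 (n : ℕ) (v : Fin n → ℝ) (ℓ : ℝ) : ℝ → ℝ :=
  fun r => S2 n v r + ℓ * L2 n r

lemma sy_eq_F0 (n : ℕ) (v : Fin n → ℝ) (ℓ : ℝ) : syDefiningFn n v ℓ = F0 n v ℓ := by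
  funext r
  simp only [syDefiningFn, F0, S0, L0]
  ring

lemma hasDerivAt_S0 (n : ℕ) (v : Fin n → ℝ) (r : ℝ) :
    HasDerivAt (S0 n v) (S1 n v r) r := by
  apply HasDerivAt.fun_sum
  intro k _
  have := (hasDerivAt_pow ((k:ℕ)+2) r).const_mul (v k)
  refine this.congr_deriv ?_
  symm
  have h2 : ((k:ℕ)+2) - 1 = (k:ℕ)+1 := by omega
  rw [h2]
  push_cast
  ring

lemma hasDerivAt_S1 (n : ℕ) (v : Fin n → ℝ) (r : ℝ) :
    HasDerivAt (S1 n v) (S2 n v r) r := by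
  apply HasDerivAt.fun_sum
  intro k _
  have := (hasDerivAt_pow ((k:ℕ)+1) r).const_mul ((((k:ℕ):ℝ)+2) * v k)
  refine this.congr_deriv ?_
  symm
  have h2 : ((k:ℕ)+1) - 1 = (k:ℕ) := by omega
  rw [h2]
  push_cast
  ring

lemma hasDerivAt_L0 (n : ℕ) {r : ℝ} (hr : 0 < r) :
    HasDerivAt (L0 n) (L1 n r) r := by
  have := (hasDerivAt_pow (n+2) r).mul (Real.hasDerivAt_log hr.ne')
  refine this.congr_deriv ?_
  symm
  have h2 : (n+2) - 1 = n+1 := by omega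
  rw [h2, L1]
  have h3 : r ^ (n+2) * r⁻¹ = r ^ (n+1) := by
    rw [pow_succ]
    field_simp
  push_cast
  rw [← h3]

lemma hasDerivAt_L1 (n : ℕ) {r : ℝ} (hr : 0 < r) :
    HasDerivAt (L1 n) (L2 n r) r := by
  have h1 := ((hasDerivAt_pow (n+1) r).const_mul ((n:ℝ)+2)).mul
    (Real.hasDerivAt_log hr.ne')
  have h2 := hasDerivAt_pow (n+1) r
  have := h1.add h2
  refine this.congr_deriv ?_
  symm
  have he : (n+1) - 1 = n := by omega
  rw [he, L2]
  have h3 : r ^ (n+1) * r⁻¹ = r ^ n := by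
    rw [pow_succ]
    field_simp
  push_cast
  rw [← h3]
  ring

lemma hasDerivAt_F0 (n : ℕ) (v : Fin n → ℝ) (ℓ : ℝ) {r : ℝ} (hr : 0 < r) :
    HasDerivAt (F0 n v ℓ) (F1 n v ℓ r) r := by
  have := (hasDerivAt_id r).add ((hasDerivAt_S0 n v r).add
    ((hasDerivAt_L0 n hr).const_mul ℓ))
  convert this using 1
  · rfl
  · rfl
  · funext x
    simp only [F0, id, Pi.add_apply]
    ring
  · simp only [F1]
    ring

lemma hasDerivAt_F1 (n : ℕ) (v : Fin n → ℝ) (ℓ : ℝ) {r : ℝ} (hr : 0 < r) :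
    HasDerivAt (F1 n v ℓ) (F2 n v ℓ r) r := by
  have := ((hasDerivAt_S1 n v r).add ((hasDerivAt_L1 n hr).const_mul ℓ)).const_add 1
  convert this using 1
  · rfl
  · rfl
  · funext x
    simp only [F1, Pi.add_apply]
    ring
  · rfl

lemma deriv_sy (n : ℕ) (v : Fin n → ℝ) (ℓ : ℝ) {r : ℝ} (hr : 0 < r) :
    deriv (syDefiningFn n v ℓ) r = F1 n v ℓ r := by
  rw [sy_eq_F0]
  exact (hasDerivAt_F0 n v ℓ hr).deriv

lemma deriv2_sy (n : ℕ) (v : Fin n → ℝ) (ℓ : ℝ) {r : ℝ} (hr : 0 < r) :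
    deriv (deriv (syDefiningFn n v ℓ)) r = F2 n v ℓ r := by
  have hev : deriv (syDefiningFn n v ℓ) =ᶠ[𝓝 r] F1 n v ℓ := by
    filter_upwards [Ioi_mem_nhds hr] with x hx
    exact deriv_sy n v ℓ hx
  rw [hev.deriv_eq]
  exact (hasDerivAt_F1 n v ℓ hr).deriv

/-- The explicit version of the Yamabe error. -/
noncomputable def Err (n : ℕ) (a ρ : ℝ → ℝ) (v : Fin n → ℝ) (ℓ : ℝ) : ℝ → ℝ :=
  fun r => (n * (n + 1) : ℝ) * (F1 n v ℓ r) ^ 2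
    - 2 * n * F0 n v ℓ r * (F2 n v ℓ r + a r * F1 n v ℓ r)
    - (F0 n v ℓ r) ^ 2 * ρ r - n * (n + 1)

lemma st_eventuallyEq (n : ℕ) (a ρ : ℝ → ℝ) (v : Fin n → ℝ) (ℓ : ℝ) :
    (fun r : ℝ =>
        (n * (n + 1) : ℝ) * (deriv (syDefiningFn n v ℓ) r) ^ 2
          - 2 * n * syDefiningFn n v ℓ r
            * (deriv (deriv (syDefiningFn n v ℓ)) r
                + a r * deriv (syDefiningFn n v ℓ) r)
          - (syDefiningFn n v ℓ r) ^ 2 * ρ r - n * (n + 1))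
      =ᶠ[𝓝[>] (0:ℝ)] Err n a ρ v ℓ := by
  filter_upwards [ev_pos] with r hr
  rw [Err, deriv_sy n v ℓ hr, deriv2_sy n v ℓ hr, sy_eq_F0]

/-! ### helper big-O algebra -/

lemma mulO {f h : ℝ → ℝ} {i j : ℕ}
    (hf : f =O[𝓝[>] (0:ℝ)] fun r => r ^ i) (hh : h =O[𝓝[>] (0:ℝ)] fun r => r ^ j) :
    (fun r => f r * h r) =O[𝓝[>] (0:ℝ)] fun r => r ^ (i+j) :=
  (hf.mul hh).congr (fun _ => rfl) (fun r => (pow_add r i j).symm)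

lemma one_mulO {f h ψ : ℝ → ℝ}
    (hf : f =O[𝓝[>] (0:ℝ)] (fun _ => (1:ℝ))) (hh : h =O[𝓝[>] (0:ℝ)] ψ) :
    (fun r => f r * h r) =O[𝓝[>] (0:ℝ)] ψ :=
  (hf.mul hh).congr (fun _ => rfl) (fun r => one_mul _)

lemma mul_oneO {f h ψ : ℝ → ℝ}
    (hf : f =O[𝓝[>] (0:ℝ)] ψ) (hh : h =O[𝓝[>] (0:ℝ)] (fun _ => (1:ℝ))) :
    (fun r => f r * h r) =O[𝓝[>] (0:ℝ)] ψ :=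
  (hf.mul hh).congr (fun _ => rfl) (fun r => mul_one _)

/-! ### Perturbation lemma A: changing the polynomial coefficients from index `m` on -/

lemma lemA {n : ℕ} (hn : 1 ≤ n) {a ρ : ℝ → ℝ}
    (ha1 : a =O[𝓝[>] (0:ℝ)] (fun _ => (1:ℝ)))
    (hρ1 : ρ =O[𝓝[>] (0:ℝ)] (fun _ => (1:ℝ)))
    (v v' : Fin n → ℝ) (ℓ ℓ' : ℝ) {m : ℕ} (hm : m < n)
    (hv : ∀ k : Fin n, (k:ℕ) < m → v' k = v k) :
    (fun r => Err n a ρ v' ℓ' r - Err n a ρ v ℓ r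
        - 2*(n:ℝ)*((m:ℝ)+2)*((n:ℝ)-(m:ℝ)) * (v' ⟨m,hm⟩ - v ⟨m,hm⟩) * r ^ (m+1))
      =O[𝓝[>] (0:ℝ)] g m := by
  set δ : ℝ := v' ⟨m,hm⟩ - v ⟨m,hm⟩ with hδ
  set lam : ℝ := ℓ' - ℓ with hlam
  -- coefficient functions of the differences
  set c0 : Fin n → ℝ := fun k => v' k - v k with hc0
  set c1 : Fin n → ℝ := fun k => (((k:ℕ):ℝ)+2) * (v' k - v k) with hc1
  set c2 : Fin n → ℝ := fun k => (((k:ℕ):ℝ)+2) * (((k:ℕ):ℝ)+1) * (v' k - v k) with hc2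
  have hc0z : ∀ k : Fin n, (k:ℕ) < m → c0 k = 0 := fun k hk => by
    simp [hc0, hv k hk]
  have hc1z : ∀ k : Fin n, (k:ℕ) < m → c1 k = 0 := fun k hk => by
    simp [hc1, hv k hk]
  have hc2z : ∀ k : Fin n, (k:ℕ) < m → c2 k = 0 := fun k hk => by
    simp [hc2, hv k hk]
  -- pointwise descriptions of the differences
  have eSum0 : ∀ r : ℝ, (∑ k : Fin n, c0 k * r ^ ((k:ℕ)+2))
      = (∑ k : Fin n, v' k * r ^ ((k:ℕ)+2)) - (∑ k : Fin n, v k * r ^ ((k:ℕ)+2)) := by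
    intro r
    rw [← Finset.sum_sub_distrib]
    exact Finset.sum_congr rfl fun k _ => by simp only [hc0]; ring
  have eSum1 : ∀ r : ℝ, (∑ k : Fin n, c1 k * r ^ ((k:ℕ)+1))
      = (∑ k : Fin n, (((k:ℕ):ℝ)+2) * v' k * r ^ ((k:ℕ)+1))
        - (∑ k : Fin n, (((k:ℕ):ℝ)+2) * v k * r ^ ((k:ℕ)+1)) := by
    intro r
    rw [← Finset.sum_sub_distrib]
    exact Finset.sum_congr rfl fun k _ => by simp only [hc1]; ring
  have eSum2 : ∀ r : ℝ, (∑ k : Fin n, c2 k * r ^ ((k:ℕ)+0))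
      = (∑ k : Fin n, (((k:ℕ):ℝ)+2) * (((k:ℕ):ℝ)+1) * v' k * r ^ (k:ℕ))
        - (∑ k : Fin n, (((k:ℕ):ℝ)+2) * (((k:ℕ):ℝ)+1) * v k * r ^ (k:ℕ)) := by
    intro r
    rw [← Finset.sum_sub_distrib]
    exact Finset.sum_congr rfl fun k _ => by simp only [hc2, Nat.add_zero]; ring
  have eD0 : ∀ r : ℝ, F0 n v' ℓ' r - F0 n v ℓ r
      = (∑ k : Fin n, c0 k * r ^ ((k:ℕ)+2)) + lam * L0 n r := by
    intro r
    simp only [F0, S0, hlam]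
    rw [eSum0 r]
    ring
  have eD1 : ∀ r : ℝ, F1 n v' ℓ' r - F1 n v ℓ r
      = (∑ k : Fin n, c1 k * r ^ ((k:ℕ)+1)) + lam * L1 n r := by
    intro r
    simp only [F1, S1, hlam]
    rw [eSum1 r]
    ring
  have eD2 : ∀ r : ℝ, F2 n v' ℓ' r - F2 n v ℓ r
      = (∑ k : Fin n, c2 k * r ^ ((k:ℕ)+0)) + lam * L2 n r := by
    intro r
    simp only [F2, S2, hlam]
    rw [eSum2 r]
    ring
  -- big-O facts about the pieces
  have hL0m : L0 n =O[𝓝[>] (0:ℝ)] fun r => r ^ (m+2) := powLog_O_pow (by omega)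
  have hL1m : L1 n =O[𝓝[>] (0:ℝ)] fun r => r ^ (m+1) := by
    have h1 := (powLog_O_pow (i := n+1) (j := m+1) (by omega)).const_mul_left ((n:ℝ)+2)
    have h2 := pow_O (i := n+1) (j := m+1) (by omega)
    exact (h1.add h2).congr (fun r => by rw [L1]; ring) (fun r => rfl)
  have hL1g : L1 n =O[𝓝[>] (0:ℝ)] g m := by
    have h1 := (powLog_O_g (i := n+1) (m := m) (by omega)).const_mul_left ((n:ℝ)+2)
    have h2 := pow_O_g (i := n+1) (m := m) (by omega)
    exact (h1.add h2).congr (fun r => by rw [L1]; ring) (fun r => rfl)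
  have hL2m : L2 n =O[𝓝[>] (0:ℝ)] fun r => r ^ m := by
    have h1 := (powLog_O_pow (i := n) (j := m) (by omega)).const_mul_left (((n:ℝ)+2)*((n:ℝ)+1))
    have h2 := (pow_O (i := n) (j := m) (by omega)).const_mul_left (2*(n:ℝ)+3)
    exact (h1.add h2).congr (fun r => by rw [L2]; ring) (fun r => rfl)
  have hrL2g : (fun r => r * L2 n r) =O[𝓝[>] (0:ℝ)] g m := by
    have h1 := (powLog_O_g (i := n+1) (m := m) (by omega)).const_mul_left (((n:ℝ)+2)*((n:ℝ)+1))
    have h2 := (pow_O_g (i := n+1) (m := m) (by omega)).const_mul_left (2*(n:ℝ)+3)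
    refine (h1.add h2).congr (fun r => ?_) (fun r => rfl)
    rw [L2]
    ring
  have hL1r : L1 n =O[𝓝[>] (0:ℝ)] fun r => r ^ 1 := by
    have h1 := (powLog_O_pow (i := n+1) (j := 1) (by omega)).const_mul_left ((n:ℝ)+2)
    have h2 := pow_O (i := n+1) (j := 1) (by omega)
    exact (h1.add h2).congr (fun r => by rw [L1]; ring) (fun r => rfl)
  have hL0two : L0 n =O[𝓝[>] (0:ℝ)] fun r => r ^ 2 := powLog_O_pow (by omega)
  have hL2one : L2 n =O[𝓝[>] (0:ℝ)] fun r => r ^ 0 := by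
    have h1 := (powLog_O_pow (i := n) (j := 0) (by omega)).const_mul_left (((n:ℝ)+2)*((n:ℝ)+1))
    have h2 := (pow_O (i := n) (j := 0) (by omega)).const_mul_left (2*(n:ℝ)+3)
    exact (h1.add h2).congr (fun r => by rw [L2]; ring) (fun r => rfl)
  -- differences
  have hD0 : (fun r => F0 n v' ℓ' r - F0 n v ℓ r) =O[𝓝[>] (0:ℝ)] fun r => r ^ (m+2) := by
    have h1 := sum_low c0 m hm hc0z 2
    have h2 := hL0m.const_mul_left lam
    exact (h1.add h2).congr (fun r => (eD0 r).symm) (fun r => rfl)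
  have hD1 : (fun r => F1 n v' ℓ' r - F1 n v ℓ r) =O[𝓝[>] (0:ℝ)] fun r => r ^ (m+1) := by
    have h1 := sum_low c1 m hm hc1z 1
    have h2 := hL1m.const_mul_left lam
    exact (h1.add h2).congr (fun r => (eD1 r).symm) (fun r => rfl)
  have hD2 : (fun r => F2 n v' ℓ' r - F2 n v ℓ r) =O[𝓝[>] (0:ℝ)] fun r => r ^ (m+0) := by
    have h1 := sum_low c2 m hm hc2z 0
    have h2 : (fun r => lam * L2 n r) =O[𝓝[>] (0:ℝ)] fun r : ℝ => r ^ (m+0) :=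
      (hL2m.const_mul_left lam).congr (fun r => rfl) (fun r => by simp)
    exact (h1.add h2).congr (fun r => (eD2 r).symm) (fun r => rfl)
  -- main-term-subtracted differences
  have hA1 : (fun r => (F1 n v' ℓ' r - F1 n v ℓ r) - ((m:ℝ)+2)*δ*r^(m+1))
      =O[𝓝[>] (0:ℝ)] g m := by
    have h1 := sum_tail c1 m hm hc1z 1
    have h2 := hL1g.const_mul_left lam
    have h3 := (h1.trans (pow_O_g (by omega))).add h2
    refine h3.congr (fun r => ?_) (fun r => rfl)
    rw [eD1 r]
    have : c1 ⟨m, hm⟩ = ((m:ℝ)+2)*δ := by simp [hc1, hδ]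
    rw [this]
    ring
  have hid1 : (fun r : ℝ => r) =O[𝓝[>] (0:ℝ)] fun r => r ^ 1 :=
    (isBigO_refl _ _).congr (fun _ => rfl) (fun r => (pow_one r).symm)
  have hA2 : (fun r => r * (F2 n v' ℓ' r - F2 n v ℓ r) - ((m:ℝ)+2)*((m:ℝ)+1)*δ*r^(m+1))
      =O[𝓝[>] (0:ℝ)] g m := by
    have h1 := (mulO hid1 (sum_tail c2 m hm hc2z 0)).trans
      (pow_O_g (by omega : m + 2 ≤ 1 + (m + 0 + 1)))
    have h2 := hrL2g.const_mul_left lam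
    refine (h1.add h2).congr (fun r => ?_) (fun r => rfl)
    rw [eD2 r]
    have hc2m : c2 ⟨m, hm⟩ = ((m:ℝ)+2)*((m:ℝ)+1)*δ := by simp [hc2, hδ]
    rw [hc2m]
    ring
  -- bounded pieces
  have hS1O : ∀ w : Fin n → ℝ, S1 n w =O[𝓝[>] (0:ℝ)] fun r => r ^ 1 := by
    intro w
    refine (sum_O (fun k => (((k:ℕ):ℝ)+2) * w k) 1).congr (fun r => ?_) (fun r => rfl)
    simp only [S1]
  have hS0O : ∀ w : Fin n → ℝ, S0 n w =O[𝓝[>] (0:ℝ)] fun r => r ^ 2 := by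
    intro w
    exact (sum_O w 2).congr (fun r => rfl) (fun r => rfl)
  have hS2O : ∀ w : Fin n → ℝ, S2 n w =O[𝓝[>] (0:ℝ)] fun r => r ^ 0 := by
    intro w
    refine (sum_O (fun k => (((k:ℕ):ℝ)+2) * (((k:ℕ):ℝ)+1) * w k) 0).congr
      (fun r => ?_) (fun r => rfl)
    simp only [S2, Nat.add_zero]
  have hone : (fun _ : ℝ => (1:ℝ)) =O[𝓝[>] (0:ℝ)] fun r => r ^ 0 :=
    (isBigO_refl _ _).congr (fun _ => rfl) (fun r => (pow_zero r).symm)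
  have hB1 : (fun r => F1 n v' ℓ' r + F1 n v ℓ r - 2) =O[𝓝[>] (0:ℝ)] fun r => r ^ 1 := by
    have h := ((hS1O v').add (hS1O v)).add (hL1r.const_mul_left (ℓ' + ℓ))
    refine h.congr (fun r => ?_) (fun r => rfl)
    simp only [F1]
    ring
  have hB0' : (fun r => F0 n v' ℓ' r - r) =O[𝓝[>] (0:ℝ)] fun r => r ^ 2 := by
    have h := (hS0O v').add (hL0two.const_mul_left ℓ')
    refine h.congr (fun r => ?_) (fun r => rfl)
    simp only [F0]
    ring
  have hF0' : F0 n v' ℓ' =O[𝓝[>] (0:ℝ)] fun r => r ^ 1 := by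
    have h := hid1.add (hB0'.trans (pow_O (by omega)))
    refine h.congr (fun r => ?_) (fun r => rfl)
    ring
  have hF0v : F0 n v ℓ =O[𝓝[>] (0:ℝ)] fun r => r ^ 1 := by
    have hB0v : (fun r => F0 n v ℓ r - r) =O[𝓝[>] (0:ℝ)] fun r => r ^ 2 := by
      have h := (hS0O v).add (hL0two.const_mul_left ℓ)
      refine h.congr (fun r => ?_) (fun r => rfl)
      simp only [F0]
      ring
    have h := hid1.add (hB0v.trans (pow_O (by omega)))
    refine h.congr (fun r => ?_) (fun r => rfl)
    ring
  have hF0s : (fun r => F0 n v' ℓ' r + F0 n v ℓ r) =O[𝓝[>] (0:ℝ)] fun r => r ^ 1 :=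
    hF0'.add hF0v
  have hF1v : F1 n v ℓ =O[𝓝[>] (0:ℝ)] fun r => r ^ 0 := by
    have h := (hone.add ((hS1O v).trans (pow_O (by omega)))).add
      ((hL1r.const_mul_left ℓ).trans (pow_O (by omega)))
    refine h.congr (fun r => ?_) (fun r => rfl)
    simp only [F1]
  have hF2v : F2 n v ℓ =O[𝓝[>] (0:ℝ)] fun r => r ^ 0 := by
    have h := (hS2O v).add (hL2one.const_mul_left ℓ)
    refine h.congr (fun r => ?_) (fun r => rfl)
    simp only [F2]
  -- the five error groups
  have hP1 : (fun r => ((n:ℝ)*((n:ℝ)+1)) * ((F1 n v' ℓ' r + F1 n v ℓ r - 2)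
        * (F1 n v' ℓ' r - F1 n v ℓ r)
        + 2*((F1 n v' ℓ' r - F1 n v ℓ r) - ((m:ℝ)+2)*δ*r^(m+1))))
      =O[𝓝[>] (0:ℝ)] g m := by
    have h := ((mulO hB1 hD1).trans (pow_O_g (i := 1+(m+1)) (m := m) (by omega))).add
      (hA1.const_mul_left 2)
    exact h.const_mul_left _
  have hP2 : (fun r => (-(2*(n:ℝ))) * ((F0 n v' ℓ' r - r) * (F2 n v' ℓ' r - F2 n v ℓ r)
        + (r * (F2 n v' ℓ' r - F2 n v ℓ r) - ((m:ℝ)+2)*((m:ℝ)+1)*δ*r^(m+1))))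
      =O[𝓝[>] (0:ℝ)] g m := by
    have h := ((mulO hB0' hD2).trans (pow_O_g (i := 2+(m+0)) (m := m) (by omega))).add hA2
    exact h.const_mul_left _
  have hP3 : (fun r => (-(2*(n:ℝ))) * ((F0 n v' ℓ' r - F0 n v ℓ r) * F2 n v ℓ r))
      =O[𝓝[>] (0:ℝ)] g m := by
    have h := (mulO hD0 hF2v).trans (pow_O_g (i := (m+2)+0) (m := m) (by omega))
    exact h.const_mul_left _
  have hP4 : (fun r => (-(2*(n:ℝ))) * (a r * (F0 n v' ℓ' r * (F1 n v' ℓ' r - F1 n v ℓ r)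
        + (F0 n v' ℓ' r - F0 n v ℓ r) * F1 n v ℓ r)))
      =O[𝓝[>] (0:ℝ)] g m := by
    have hinner := ((mulO hF0' hD1).trans (pow_O_g (i := 1+(m+1)) (m := m) (by omega))).add
      ((mulO hD0 hF1v).trans (pow_O_g (i := (m+2)+0) (m := m) (by omega)))
    exact (one_mulO ha1 hinner).const_mul_left _
  have hP5 : (fun r => (-(ρ r)) * ((F0 n v' ℓ' r + F0 n v ℓ r)
        * (F0 n v' ℓ' r - F0 n v ℓ r)))
      =O[𝓝[>] (0:ℝ)] g m := by
    have hinner := (mulO hF0s hD0).trans (pow_O_g (i := 1+(m+2)) (m := m) (by omega))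
    exact one_mulO hρ1.neg_left hinner
  have h := (((hP1.add hP2).add hP3).add hP4).add hP5
  refine h.congr (fun r => ?_) (fun r => rfl)
  simp only [Err, F0, F1, F2]
  push_cast
  ring

/-! ### Perturbation lemma B: changing the log coefficient -/

lemma lemB {n : ℕ} (hn : 1 ≤ n) {a ρ : ℝ → ℝ}
    (ha1 : a =O[𝓝[>] (0:ℝ)] (fun _ => (1:ℝ)))
    (hρ1 : ρ =O[𝓝[>] (0:ℝ)] (fun _ => (1:ℝ)))
    (v : Fin n → ℝ) (ℓ ℓ' : ℝ) :
    (fun r => Err n a ρ v ℓ' r - Err n a ρ v ℓ r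
        + 2*(n:ℝ)*((n:ℝ)+2)*(ℓ'-ℓ) * r ^ (n+1))
      =O[𝓝[>] (0:ℝ)] fun r => r ^ (n+2) * Real.log r := by
  set lam : ℝ := ℓ' - ℓ with hlam
  set G1 : ℝ → ℝ := fun r => r ^ (n+1) * (1 + |Real.log r|) with hG1
  set G2 : ℝ → ℝ := fun r => r ^ n * (1 + |Real.log r|) with hG2
  have htgt : g n =O[𝓝[>] (0:ℝ)] fun r => r ^ (n+2) * Real.log r := gn_O_target n
  -- L-bounds against the (1+|log|) scales
  have hL1G : L1 n =O[𝓝[>] (0:ℝ)] G1 := by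
    have h1 := (powLog_O_G (i := n+1) (j := n+1) le_rfl).const_mul_left ((n:ℝ)+2)
    have h2 := pow_O_G (i := n+1) (j := n+1) le_rfl
    exact (h1.add h2).congr (fun r => by rw [L1]; ring) (fun r => rfl)
  have hL2G : L2 n =O[𝓝[>] (0:ℝ)] G2 := by
    have h1 := (powLog_O_G (i := n) (j := n) le_rfl).const_mul_left (((n:ℝ)+2)*((n:ℝ)+1))
    have h2 := (pow_O_G (i := n) (j := n) le_rfl).const_mul_left (2*(n:ℝ)+3)
    exact (h1.add h2).congr (fun r => by rw [L2]; ring) (fun r => rfl)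
  have hL0h : L0 n =O[𝓝[>] (0:ℝ)] fun r => r ^ (n+2) * Real.log r := isBigO_refl _ _
  -- products with powers of r land in `g n`, hence in the target
  have hrG1 : (fun r : ℝ => r ^ 1 * G1 r) =O[𝓝[>] (0:ℝ)] fun r => r ^ (n+2) * Real.log r := by
    refine (htgt.congr (fun r => ?_) (fun r => rfl))
    rw [hG1, g]
    ring
  have hr2G2 : (fun r : ℝ => r ^ 2 * G2 r) =O[𝓝[>] (0:ℝ)] fun r => r ^ (n+2) * Real.log r := by
    refine (htgt.congr (fun r => ?_) (fun r => rfl))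
    rw [hG2, g]
    ring
  have hrh : (fun r : ℝ => r ^ 1 * (r ^ (n+2) * Real.log r))
      =O[𝓝[>] (0:ℝ)] fun r => r ^ (n+2) * Real.log r := by
    refine (powLog_O_powLog (i := n+3) (j := n+2) (by omega)).congr (fun r => ?_) (fun r => rfl)
    ring
  -- bounded pieces (same as in lemma A)
  have hid1 : (fun r : ℝ => r) =O[𝓝[>] (0:ℝ)] fun r => r ^ 1 :=
    (isBigO_refl _ _).congr (fun _ => rfl) (fun r => (pow_one r).symm)
  have hone : (fun _ : ℝ => (1:ℝ)) =O[𝓝[>] (0:ℝ)] fun r => r ^ 0 :=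
    (isBigO_refl _ _).congr (fun _ => rfl) (fun r => (pow_zero r).symm)
  have hS1O : ∀ w : Fin n → ℝ, S1 n w =O[𝓝[>] (0:ℝ)] fun r => r ^ 1 := by
    intro w
    refine (sum_O (fun k => (((k:ℕ):ℝ)+2) * w k) 1).congr (fun r => ?_) (fun r => rfl)
    simp only [S1]
  have hS0O : ∀ w : Fin n → ℝ, S0 n w =O[𝓝[>] (0:ℝ)] fun r => r ^ 2 := by
    intro w
    exact (sum_O w 2).congr (fun r => rfl) (fun r => rfl)
  have hS2O : ∀ w : Fin n → ℝ, S2 n w =O[𝓝[>] (0:ℝ)] fun r => r ^ 0 := by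
    intro w
    refine (sum_O (fun k => (((k:ℕ):ℝ)+2) * (((k:ℕ):ℝ)+1) * w k) 0).congr
      (fun r => ?_) (fun r => rfl)
    simp only [S2, Nat.add_zero]
  have hL1r : L1 n =O[𝓝[>] (0:ℝ)] fun r => r ^ 1 := by
    have h1 := (powLog_O_pow (i := n+1) (j := 1) (by omega)).const_mul_left ((n:ℝ)+2)
    have h2 := pow_O (i := n+1) (j := 1) (by omega)
    exact (h1.add h2).congr (fun r => by rw [L1]; ring) (fun r => rfl)
  have hL0two : L0 n =O[𝓝[>] (0:ℝ)] fun r => r ^ 2 := powLog_O_pow (by omega)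
  have hL2one : L2 n =O[𝓝[>] (0:ℝ)] fun r => r ^ 0 := by
    have h1 := (powLog_O_pow (i := n) (j := 0) (by omega)).const_mul_left (((n:ℝ)+2)*((n:ℝ)+1))
    have h2 := (pow_O (i := n) (j := 0) (by omega)).const_mul_left (2*(n:ℝ)+3)
    exact (h1.add h2).congr (fun r => by rw [L2]; ring) (fun r => rfl)
  have hB1 : (fun r => F1 n v ℓ' r + F1 n v ℓ r - 2) =O[𝓝[>] (0:ℝ)] fun r => r ^ 1 := by
    have h := ((hS1O v).add (hS1O v)).add (hL1r.const_mul_left (ℓ' + ℓ))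
    refine h.congr (fun r => ?_) (fun r => rfl)
    simp only [F1]
    ring
  have hB0' : (fun r => F0 n v ℓ' r - r) =O[𝓝[>] (0:ℝ)] fun r => r ^ 2 := by
    have h := (hS0O v).add (hL0two.const_mul_left ℓ')
    refine h.congr (fun r => ?_) (fun r => rfl)
    simp only [F0]
    ring
  have hF0' : F0 n v ℓ' =O[𝓝[>] (0:ℝ)] fun r => r ^ 1 := by
    have h := hid1.add (hB0'.trans (pow_O (by omega)))
    refine h.congr (fun r => ?_) (fun r => rfl)
    ring
  have hF0v : F0 n v ℓ =O[𝓝[>] (0:ℝ)] fun r => r ^ 1 := by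
    have hB0v : (fun r => F0 n v ℓ r - r) =O[𝓝[>] (0:ℝ)] fun r => r ^ 2 := by
      have h := (hS0O v).add (hL0two.const_mul_left ℓ)
      refine h.congr (fun r => ?_) (fun r => rfl)
      simp only [F0]
      ring
    have h := hid1.add (hB0v.trans (pow_O (by omega)))
    refine h.congr (fun r => ?_) (fun r => rfl)
    ring
  have hF0s : (fun r => F0 n v ℓ' r + F0 n v ℓ r) =O[𝓝[>] (0:ℝ)] fun r => r ^ 1 :=
    hF0'.add hF0v
  have hF1v : F1 n v ℓ =O[𝓝[>] (0:ℝ)] fun r => r ^ 0 := by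
    have h := (hone.add ((hS1O v).trans (pow_O (by omega)))).add
      ((hL1r.const_mul_left ℓ).trans (pow_O (by omega)))
    refine h.congr (fun r => ?_) (fun r => rfl)
    simp only [F1]
  have hF2v : F2 n v ℓ =O[𝓝[>] (0:ℝ)] fun r => r ^ 0 := by
    have h := (hS2O v).add (hL2one.const_mul_left ℓ)
    refine h.congr (fun r => ?_) (fun r => rfl)
    simp only [F2]
  -- the five error groups
  have hQ1 : (fun r => ((n:ℝ)*((n:ℝ)+1)) * ((F1 n v ℓ' r + F1 n v ℓ r - 2) * (lam * L1 n r)))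
      =O[𝓝[>] (0:ℝ)] fun r => r ^ (n+2) * Real.log r := by
    have h := (hB1.mul (hL1G.const_mul_left lam)).trans hrG1
    exact h.const_mul_left _
  have hQ2 : (fun r => (-(2*(n:ℝ))) * ((F0 n v ℓ' r - r) * (lam * L2 n r)))
      =O[𝓝[>] (0:ℝ)] fun r => r ^ (n+2) * Real.log r := by
    have h := (hB0'.mul (hL2G.const_mul_left lam)).trans hr2G2
    exact h.const_mul_left _
  have hF2one : F2 n v ℓ =O[𝓝[>] (0:ℝ)] (fun _ => (1:ℝ)) :=
    hF2v.congr (fun _ => rfl) (fun r => pow_zero r)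
  have hF1one : F1 n v ℓ =O[𝓝[>] (0:ℝ)] (fun _ => (1:ℝ)) :=
    hF1v.congr (fun _ => rfl) (fun r => pow_zero r)
  have hQ3 : (fun r => (-(2*(n:ℝ))) * (lam * L0 n r * F2 n v ℓ r))
      =O[𝓝[>] (0:ℝ)] fun r => r ^ (n+2) * Real.log r := by
    have h := mul_oneO (hL0h.const_mul_left lam) hF2one
    exact h.const_mul_left _
  have hQ4 : (fun r => (-(2*(n:ℝ))) * (a r * (F0 n v ℓ' r * (lam * L1 n r)
        + lam * L0 n r * F1 n v ℓ r)))
      =O[𝓝[>] (0:ℝ)] fun r => r ^ (n+2) * Real.log r := by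
    have hinner := ((hF0'.mul (hL1G.const_mul_left lam)).trans hrG1).add
      (mul_oneO (hL0h.const_mul_left lam) hF1one)
    exact (one_mulO ha1 hinner).const_mul_left _
  have hQ5 : (fun r => (-(ρ r)) * ((F0 n v ℓ' r + F0 n v ℓ r) * (lam * L0 n r)))
      =O[𝓝[>] (0:ℝ)] fun r => r ^ (n+2) * Real.log r := by
    have hinner := (hF0s.mul (hL0h.const_mul_left lam)).trans hrh
    exact one_mulO hρ1.neg_left hinner
  have h := (((hQ1.add hQ2).add hQ3).add hQ4).add hQ5
  refine h.congr (fun r => ?_) (fun r => rfl)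
  rw [hlam]
  simp only [Err, F0, F1, F2, L0, L1, L2]
  push_cast
  ring

/-! ### Smoothness of the polynomial error, base case, existence -/

lemma err_poly_eq (n : ℕ) (a ρ : ℝ → ℝ) (v : Fin n → ℝ) :
    Err n a ρ v 0 = fun r =>
      (n * (n + 1) : ℝ) * (1 + S1 n v r) ^ 2
        - 2 * n * (r + S0 n v r) * (S2 n v r + a r * (1 + S1 n v r))
        - (r + S0 n v r) ^ 2 * ρ r - n * (n + 1) := by
  funext r
  simp only [Err, F0, F1, F2, zero_mul, add_zero]

lemma contDiff_S0 (n : ℕ) (v : Fin n → ℝ) : ContDiff ℝ (⊤:ℕ∞) (S0 n v) := by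
  apply ContDiff.sum
  intro k _
  exact contDiff_const.mul (contDiff_id.pow _)

lemma contDiff_S1 (n : ℕ) (v : Fin n → ℝ) : ContDiff ℝ (⊤:ℕ∞) (S1 n v) := by
  apply ContDiff.sum
  intro k _
  exact contDiff_const.mul (contDiff_id.pow _)

lemma contDiff_S2 (n : ℕ) (v : Fin n → ℝ) : ContDiff ℝ (⊤:ℕ∞) (S2 n v) := by
  apply ContDiff.sum
  intro k _
  exact contDiff_const.mul (contDiff_id.pow _)

lemma err_poly_smooth {n : ℕ} {a ρ : ℝ → ℝ} {U : Set ℝ}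
    (ha : ContDiffOn ℝ (⊤:ℕ∞) a U) (hρ : ContDiffOn ℝ (⊤:ℕ∞) ρ U)
    (v : Fin n → ℝ) : ContDiffOn ℝ (⊤:ℕ∞) (Err n a ρ v 0) U := by
  rw [err_poly_eq]
  have hq : ContDiff ℝ (⊤:ℕ∞) (fun r => 1 + S1 n v r) :=
    contDiff_const.add (contDiff_S1 n v)
  have hp : ContDiff ℝ (⊤:ℕ∞) (fun r : ℝ => r + S0 n v r) :=
    contDiff_id.add (contDiff_S0 n v)
  refine ContDiffOn.sub (ContDiffOn.sub (ContDiffOn.sub ?_ ?_) ?_) contDiffOn_const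
  · exact (contDiff_const.mul (hq.pow 2)).contDiffOn
  · refine ContDiffOn.mul ((contDiff_const.mul hp).contDiffOn) ?_
    exact (contDiff_S2 n v).contDiffOn.add (ha.mul hq.contDiffOn)
  · exact ((hp.pow 2).contDiffOn).mul hρ

lemma err_base {n : ℕ} (hn : 1 ≤ n) {a ρ : ℝ → ℝ}
    (ha1 : a =O[𝓝[>] (0:ℝ)] (fun _ => (1:ℝ)))
    (hρ1 : ρ =O[𝓝[>] (0:ℝ)] (fun _ => (1:ℝ))) :
    Err n a ρ 0 0 =O[𝓝[>] (0:ℝ)] fun r => r ^ 1 := by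
  have hid1 : (fun r : ℝ => r) =O[𝓝[>] (0:ℝ)] fun r => r ^ 1 :=
    (isBigO_refl _ _).congr (fun _ => rfl) (fun r => (pow_one r).symm)
  have h1 : (fun r : ℝ => (-(2*(n:ℝ))) * (a r * r)) =O[𝓝[>] (0:ℝ)] fun r => r ^ 1 :=
    (one_mulO ha1 hid1).const_mul_left _
  have h2 : (fun r : ℝ => (-(ρ r)) * (r * r)) =O[𝓝[>] (0:ℝ)] fun r => r ^ 1 :=
    one_mulO hρ1.neg_left ((mulO hid1 hid1).trans (pow_O (by omega)))
  refine (h1.add h2).congr (fun r => ?_) (fun r => rfl)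
  simp only [Err, F0, F1, F2, S0, S1, S2, Pi.zero_apply, zero_mul, mul_zero, add_zero,
    Finset.sum_const_zero]
  ring

lemma exists_poly {n : ℕ} (hn : 1 ≤ n) {a ρ : ℝ → ℝ} {U : Set ℝ}
    (hUo : IsOpen U) (hU0 : (0:ℝ) ∈ U)
    (ha : ContDiffOn ℝ (⊤:ℕ∞) a U) (hρ : ContDiffOn ℝ (⊤:ℕ∞) ρ U)
    (ha1 : a =O[𝓝[>] (0:ℝ)] (fun _ => (1:ℝ)))
    (hρ1 : ρ =O[𝓝[>] (0:ℝ)] (fun _ => (1:ℝ))) :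
    ∀ m : ℕ, m ≤ n → ∃ v : Fin n → ℝ,
      Err n a ρ v 0 =O[𝓝[>] (0:ℝ)] fun r => r ^ (m+1) := by
  intro m
  induction m with
  | zero => exact fun _ => ⟨0, err_base hn ha1 hρ1⟩
  | succ m IH =>
    intro hm1
    have hm : m < n := by omega
    obtain ⟨v, hv⟩ := IH (by omega)
    obtain ⟨c, hc⟩ := smooth_extract hUo hU0 (err_poly_smooth ha hρ v) m hv
    set K : ℝ := 2*(n:ℝ)*((m:ℝ)+2)*((n:ℝ)-(m:ℝ)) with hK
    have hKpos : 0 < K := by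
      have h1 : (m:ℝ) < (n:ℝ) := by exact_mod_cast hm
      have h2 : (1:ℝ) ≤ (n:ℝ) := by exact_mod_cast hn
      rw [hK]
      have p1 : (0:ℝ) < 2*(n:ℝ) := by linarith
      have p2 : (0:ℝ) < (m:ℝ)+2 := by positivity
      have p3 : (0:ℝ) < (n:ℝ)-(m:ℝ) := by linarith
      exact mul_pos (mul_pos p1 p2) p3
    obtain ⟨δ, hKδ0⟩ : ∃ δ : ℝ, K * δ = -c :=
      ⟨-c / K, by field_simp⟩
    set v' : Fin n → ℝ := Function.update v ⟨m, hm⟩ (v ⟨m, hm⟩ + δ) with hv'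
    have hlow : ∀ k : Fin n, (k:ℕ) < m → v' k = v k := by
      intro k hk
      rw [hv']
      refine Function.update_of_ne (fun he => ?_) _ _
      rw [he] at hk
      simp only [Fin.val_mk] at hk
      omega
    have hδval : v' ⟨m, hm⟩ - v ⟨m, hm⟩ = δ := by
      rw [hv', Function.update_self]
      ring
    have hA := lemA hn ha1 hρ1 v v' 0 0 hm hlow
    rw [hδval] at hA
    -- assemble: Err v' 0 = [difference - main] + [Err v 0 - c r^(m+1)] + (c + K δ) r^(m+1)
    have hEv' : Err n a ρ v' 0 =O[𝓝[>] (0:ℝ)] g m := by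
      have hc' := hc.trans (pow_O_g (le_refl (m+2)))
      have h := hA.add hc'
      refine h.congr (fun r => ?_) (fun r => rfl)
      have hthis : 2*(n:ℝ)*((m:ℝ)+2)*((n:ℝ)-(m:ℝ)) * δ = -c := by
        rw [← hK]
        exact hKδ0
      linear_combination (-(r ^ (m+1))) * hthis
    have hO1 : Err n a ρ v' 0 =O[𝓝[>] (0:ℝ)] fun r => r ^ (m+1) :=
      hEv'.trans (g_littleO m).isBigO
    obtain ⟨c', hc'⟩ := smooth_extract hUo hU0 (err_poly_smooth ha hρ v') m hO1
    have hcc : (fun r : ℝ => c' * r ^ (m+1)) =O[𝓝[>] (0:ℝ)] g m := by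
      have h := hEv'.sub (hc'.trans (pow_O_g (le_refl (m+2))))
      exact h.congr (fun r => by ring) (fun r => rfl)
    have hc0 : c' = 0 := coeff_eq_zero hcc (g_littleO m)
    refine ⟨v', ?_⟩
    exact hc'.congr (fun r => by rw [hc0]; ring) (fun r => rfl)

lemma exists_sol {n : ℕ} (hn : 1 ≤ n) {a ρ : ℝ → ℝ} {U : Set ℝ}
    (hUo : IsOpen U) (hU0 : (0:ℝ) ∈ U)
    (ha : ContDiffOn ℝ (⊤:ℕ∞) a U) (hρ : ContDiffOn ℝ (⊤:ℕ∞) ρ U)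
    (ha1 : a =O[𝓝[>] (0:ℝ)] (fun _ => (1:ℝ)))
    (hρ1 : ρ =O[𝓝[>] (0:ℝ)] (fun _ => (1:ℝ))) :
    ∃ v : Fin n → ℝ, ∃ ℓ : ℝ,
      Err n a ρ v ℓ =O[𝓝[>] (0:ℝ)] fun r => r ^ (n+2) * Real.log r := by
  obtain ⟨v, hv⟩ := exists_poly hn hUo hU0 ha hρ ha1 hρ1 n le_rfl
  obtain ⟨c, hc⟩ := smooth_extract hUo hU0 (err_poly_smooth ha hρ v) n hv
  have hKpos : (0:ℝ) < 2*(n:ℝ)*((n:ℝ)+2) := by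
    have h2 : (1:ℝ) ≤ (n:ℝ) := by exact_mod_cast hn
    nlinarith
  obtain ⟨ℓ, hKℓ⟩ : ∃ ℓ : ℝ, 2*(n:ℝ)*((n:ℝ)+2) * ℓ = c :=
    ⟨c / (2*(n:ℝ)*((n:ℝ)+2)), by field_simp⟩
  have hB := lemB hn ha1 hρ1 v 0 ℓ
  have hrn2 : (fun r : ℝ => r ^ (n+2)) =O[𝓝[>] (0:ℝ)] fun r => r ^ (n+2) * Real.log r :=
    (pow_O_g (le_refl (n+2))).trans (gn_O_target n)
  have hc2 := hc.trans hrn2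
  have h := hB.add hc2
  refine ⟨v, ℓ, h.congr (fun r => ?_) (fun r => rfl)⟩
  linear_combination (r ^ (n+1)) * hKℓ

lemma unique_sol {n : ℕ} (hn : 1 ≤ n) {a ρ : ℝ → ℝ}
    (ha1 : a =O[𝓝[>] (0:ℝ)] (fun _ => (1:ℝ)))
    (hρ1 : ρ =O[𝓝[>] (0:ℝ)] (fun _ => (1:ℝ)))
    (v v' : Fin n → ℝ) (ℓ ℓ' : ℝ)
    (h1 : Err n a ρ v ℓ =O[𝓝[>] (0:ℝ)] fun r => r ^ (n+2) * Real.log r)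
    (h2 : Err n a ρ v' ℓ' =O[𝓝[>] (0:ℝ)] fun r => r ^ (n+2) * Real.log r) :
    v' = v ∧ ℓ' = ℓ := by
  have hdiff : (fun r => Err n a ρ v' ℓ' r - Err n a ρ v ℓ r)
      =O[𝓝[>] (0:ℝ)] fun r => r ^ (n+2) * Real.log r := h2.sub h1
  have hall : ∀ m : ℕ, ∀ hm : m < n, v' ⟨m,hm⟩ = v ⟨m,hm⟩ := by
    intro m
    induction m using Nat.strong_induction_on with
    | _ m IH =>
      intro hm
      have hlow : ∀ k : Fin n, (k:ℕ) < m → v' k = v k := by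
        intro k hk
        have := IH (k:ℕ) hk k.2
        simpa using this
      have hA := lemA hn ha1 hρ1 v v' ℓ ℓ' hm hlow
      have hdg : (fun r => Err n a ρ v' ℓ' r - Err n a ρ v ℓ r)
          =O[𝓝[>] (0:ℝ)] g m := hdiff.trans (powLog_O_g (by omega))
      have hcc : (fun r : ℝ => (2*(n:ℝ)*((m:ℝ)+2)*((n:ℝ)-(m:ℝ))
            * (v' ⟨m,hm⟩ - v ⟨m,hm⟩)) * r ^ (m+1)) =O[𝓝[>] (0:ℝ)] g m := by
        have h := hdg.sub hA
        exact h.congr (fun r => by ring) (fun r => rfl)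
      have h0 := coeff_eq_zero hcc (g_littleO m)
      have hKpos : (0:ℝ) < 2*(n:ℝ)*((m:ℝ)+2)*((n:ℝ)-(m:ℝ)) := by
        have hc1 : (m:ℝ) < (n:ℝ) := by exact_mod_cast hm
        have hc2 : (1:ℝ) ≤ (n:ℝ) := by exact_mod_cast hn
        have p1 : (0:ℝ) < 2*(n:ℝ) := by linarith
        have p2 : (0:ℝ) < (m:ℝ)+2 := by positivity
        have p3 : (0:ℝ) < (n:ℝ)-(m:ℝ) := by linarith
        exact mul_pos (mul_pos p1 p2) p3
      rcases mul_eq_zero.1 h0 with hbad | hgood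
      · exact absurd hbad (ne_of_gt hKpos)
      · exact sub_eq_zero.1 hgood
  have hveq : v' = v := funext fun k => by
    have := hall (k:ℕ) k.2
    simpa using this
  refine ⟨hveq, ?_⟩
  rw [hveq] at hdiff
  have hB := lemB hn ha1 hρ1 v ℓ ℓ'
  have hcc : (fun r : ℝ => (2*(n:ℝ)*((n:ℝ)+2)*(ℓ'-ℓ)) * r ^ (n+1))
      =O[𝓝[>] (0:ℝ)] g n := by
    have h := (hB.trans (powLog_O_g (le_refl (n+2)))).sub
      (hdiff.trans (powLog_O_g (le_refl (n+2))))
    exact h.congr (fun r => by ring) (fun r => rfl)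
  have h0 := coeff_eq_zero hcc (g_littleO n)
  have hKpos : (0:ℝ) < 2*(n:ℝ)*((n:ℝ)+2) := by
    have h2 : (1:ℝ) ≤ (n:ℝ) := by exact_mod_cast hn
    nlinarith
  rcases mul_eq_zero.1 h0 with hbad | hgood
  · exact absurd hbad (ne_of_gt hKpos)
  · exact sub_eq_zero.1 hgood

end SY

/-- radial formal solvability of the singular Yamabe problem: there exist
unique coefficients `u₂, …, u_{n+1}, ℓ` such that `u = r + u₂r² + ⋯ + ℓ r^{n+2} log r`
satisfies `n(n+1)(u')² − 2nu(u'' + a u') − u²ρ − n(n+1) = O(r^{n+2} log r)` as `r → 0⁺`. -/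
theorem stmt13 (n : ℕ) (hn : 1 ≤ n) (a ρ : ℝ → ℝ) (U : Set ℝ)
    (hUo : IsOpen U) (hU0 : (0 : ℝ) ∈ U)
    (ha : ContDiffOn ℝ (⊤ : ℕ∞) a U) (hρ : ContDiffOn ℝ (⊤ : ℕ∞) ρ U) :
    ∃! vl : (Fin n → ℝ) × ℝ,
      (fun r : ℝ =>
          (n * (n + 1) : ℝ) * (deriv (syDefiningFn n vl.1 vl.2) r) ^ 2
            - 2 * n * syDefiningFn n vl.1 vl.2 r
              * (deriv (deriv (syDefiningFn n vl.1 vl.2)) r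
                  + a r * deriv (syDefiningFn n vl.1 vl.2) r)
            - (syDefiningFn n vl.1 vl.2 r) ^ 2 * ρ r - n * (n + 1))
        =O[𝓝[>] 0] fun r => r ^ (n + 2) * Real.log r := by
  have ha1 : a =O[𝓝[>] (0:ℝ)] (fun _ => (1:ℝ)) := by
    have hca : ContinuousAt a 0 :=
      (ha.continuousOn.continuousWithinAt hU0).continuousAt (hUo.mem_nhds hU0)
    exact (hca.tendsto.mono_left nhdsWithin_le_nhds).isBigO_one ℝ
  have hρ1 : ρ =O[𝓝[>] (0:ℝ)] (fun _ => (1:ℝ)) := by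
    have hcρ : ContinuousAt ρ 0 :=
      (hρ.continuousOn.continuousWithinAt hU0).continuousAt (hUo.mem_nhds hU0)
    exact (hcρ.tendsto.mono_left nhdsWithin_le_nhds).isBigO_one ℝ
  obtain ⟨v, ℓ, hvℓ⟩ := SY.exists_sol hn hUo hU0 ha hρ ha1 hρ1
  refine ⟨(v, ℓ), ?_, ?_⟩
  · exact hvℓ.congr' (SY.st_eventuallyEq n a ρ v ℓ).symm EventuallyEq.rfl
  · rintro ⟨v₂, ℓ₂⟩ h₂
    have h₂' : SY.Err n a ρ v₂ ℓ₂ =O[𝓝[>] (0:ℝ)] fun r => r ^ (n+2) * Real.log r :=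
      h₂.congr' (SY.st_eventuallyEq n a ρ v₂ ℓ₂) EventuallyEq.rfl
    obtain ⟨hv, hℓ⟩ := SY.unique_sol hn ha1 hρ1 v v₂ ℓ ℓ₂ hvℓ h₂'
    simp only [Prod.mk.injEq]
    exact ⟨hv, hℓ⟩
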